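/- Let A, B ∈ ℝ^{n×n} with B invertible, and let P ∈ ℝ^{n×n} be symmetric positive definite satisfying (1/2)PBBᵀP − 2B⁻ᵀB⁻¹ + (B⁻¹A)ᵀ(B⁻¹A) = 0. Then the 2n×2n symmetric block matrix [[AᵀP + PA, PB − AᵀB⁻ᵀ], [BᵀP − B⁻¹A, −2I]] is negative semidefinite if and only if the 2n×2n symmetric block matrix [[AᵀP + PA + 2B⁻ᵀB⁻¹, PB], [BᵀP, −2I]] is negative semidefinite. -/
import Mathlib

open Matrix

section Aux

variable {n : ℕ}

private lemma dpT (M : Matrix (Fin n) (Fin n) ℝ) (x y : Fin n → ℝ) :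
    x ⬝ᵥ (Mᵀ *ᵥ y) = (M *ᵥ x) ⬝ᵥ y := by
  rw [Matrix.dotProduct_mulVec, Matrix.vecMul_transpose]

private lemma dpT' (M : Matrix (Fin n) (Fin n) ℝ) (x y : Fin n → ℝ) :
    (Mᵀ *ᵥ x) ⬝ᵥ y = x ⬝ᵥ (M *ᵥ y) := by
  rw [dotProduct_comm, dpT, dotProduct_comm]

private lemma dp_self_nonneg (v : Fin n → ℝ) : 0 ≤ v ⬝ᵥ v :=
  Finset.sum_nonneg fun _ _ => mul_self_nonneg _

/-- Quadratic form of the first block matrix. -/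
private lemma form1 (A B P : Matrix (Fin n) (Fin n) ℝ)
    (hBB : B * B⁻¹ = 1) (hPt : Pᵀ = P) (x u : Fin n → ℝ) :
    Sum.elim x u ⬝ᵥ ((Matrix.fromBlocks
        (Aᵀ * P + P * A) (P * B - Aᵀ * B⁻¹ᵀ)
        (Bᵀ * P - B⁻¹ * A) (-(2 : ℝ) • (1 : Matrix (Fin n) (Fin n) ℝ))) *ᵥ Sum.elim x u)
    = 2 * ((Bᵀ *ᵥ (P *ᵥ x)) ⬝ᵥ (B⁻¹ *ᵥ (A *ᵥ x)))
      + 2 * ((Bᵀ *ᵥ (P *ᵥ x)) ⬝ᵥ u) - 2 * ((B⁻¹ *ᵥ (A *ᵥ x)) ⬝ᵥ u)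
      - 2 * (u ⬝ᵥ u) := by
  have hab : (Bᵀ *ᵥ (P *ᵥ x)) ⬝ᵥ (B⁻¹ *ᵥ (A *ᵥ x)) = (P *ᵥ x) ⬝ᵥ (A *ᵥ x) := by
    rw [dpT', Matrix.mulVec_mulVec, hBB, Matrix.one_mulVec]
  have h1 : x ⬝ᵥ ((Aᵀ * P) *ᵥ x) = (P *ᵥ x) ⬝ᵥ (A *ᵥ x) := by
    rw [← Matrix.mulVec_mulVec, dpT, dotProduct_comm]
  have h2 : x ⬝ᵥ ((P * A) *ᵥ x) = (P *ᵥ x) ⬝ᵥ (A *ᵥ x) := by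
    conv_lhs => rw [← hPt]
    rw [← Matrix.mulVec_mulVec, dpT]
  have h3 : x ⬝ᵥ ((P * B) *ᵥ u) = (Bᵀ *ᵥ (P *ᵥ x)) ⬝ᵥ u := by
    rw [dpT']
    conv_lhs => rw [← hPt]
    rw [← Matrix.mulVec_mulVec, dpT]
  have h4 : x ⬝ᵥ ((Aᵀ * B⁻¹ᵀ) *ᵥ u) = (B⁻¹ *ᵥ (A *ᵥ x)) ⬝ᵥ u := by
    rw [← Matrix.mulVec_mulVec, dpT, dpT]
  have h5 : u ⬝ᵥ ((Bᵀ * P) *ᵥ x) = (Bᵀ *ᵥ (P *ᵥ x)) ⬝ᵥ u := by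
    rw [← Matrix.mulVec_mulVec, dotProduct_comm]
  have h6 : u ⬝ᵥ ((B⁻¹ * A) *ᵥ x) = (B⁻¹ *ᵥ (A *ᵥ x)) ⬝ᵥ u := by
    rw [← Matrix.mulVec_mulVec, dotProduct_comm]
  have h7 : u ⬝ᵥ ((-(2 : ℝ) • (1 : Matrix (Fin n) (Fin n) ℝ)) *ᵥ u) = -2 * (u ⬝ᵥ u) := by
    rw [Matrix.smul_mulVec, Matrix.one_mulVec, dotProduct_smul]
    simp [smul_eq_mul]
  rw [Matrix.fromBlocks_mulVec, sumElim_dotProduct_sumElim]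
  simp only [Sum.elim_comp_inl, Sum.elim_comp_inr]
  simp only [Matrix.add_mulVec, Matrix.sub_mulVec, dotProduct_add,
    dotProduct_sub, h1, h2, h3, h4, h5, h6, h7]
  rw [hab]
  ring

/-- Quadratic form of the second block matrix. -/
private lemma form2 (A B P : Matrix (Fin n) (Fin n) ℝ)
    (hBB : B * B⁻¹ = 1) (hPt : Pᵀ = P) (x u : Fin n → ℝ) :
    Sum.elim x u ⬝ᵥ ((Matrix.fromBlocks
        (Aᵀ * P + P * A + (2 : ℝ) • (B⁻¹ᵀ * B⁻¹)) (P * B)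
        (Bᵀ * P) (-(2 : ℝ) • (1 : Matrix (Fin n) (Fin n) ℝ))) *ᵥ Sum.elim x u)
    = 2 * ((Bᵀ *ᵥ (P *ᵥ x)) ⬝ᵥ (B⁻¹ *ᵥ (A *ᵥ x)))
      + 2 * ((B⁻¹ *ᵥ x) ⬝ᵥ (B⁻¹ *ᵥ x))
      + 2 * ((Bᵀ *ᵥ (P *ᵥ x)) ⬝ᵥ u) - 2 * (u ⬝ᵥ u) := by
  have hab : (Bᵀ *ᵥ (P *ᵥ x)) ⬝ᵥ (B⁻¹ *ᵥ (A *ᵥ x)) = (P *ᵥ x) ⬝ᵥ (A *ᵥ x) := by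
    rw [dpT', Matrix.mulVec_mulVec, hBB, Matrix.one_mulVec]
  have h1 : x ⬝ᵥ ((Aᵀ * P) *ᵥ x) = (P *ᵥ x) ⬝ᵥ (A *ᵥ x) := by
    rw [← Matrix.mulVec_mulVec, dpT, dotProduct_comm]
  have h2 : x ⬝ᵥ ((P * A) *ᵥ x) = (P *ᵥ x) ⬝ᵥ (A *ᵥ x) := by
    conv_lhs => rw [← hPt]
    rw [← Matrix.mulVec_mulVec, dpT]
  have h3 : x ⬝ᵥ ((P * B) *ᵥ u) = (Bᵀ *ᵥ (P *ᵥ x)) ⬝ᵥ u := by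
    rw [dpT']
    conv_lhs => rw [← hPt]
    rw [← Matrix.mulVec_mulVec, dpT]
  have h5 : u ⬝ᵥ ((Bᵀ * P) *ᵥ x) = (Bᵀ *ᵥ (P *ᵥ x)) ⬝ᵥ u := by
    rw [← Matrix.mulVec_mulVec, dotProduct_comm]
  have h7 : u ⬝ᵥ ((-(2 : ℝ) • (1 : Matrix (Fin n) (Fin n) ℝ)) *ᵥ u) = -2 * (u ⬝ᵥ u) := by
    rw [Matrix.smul_mulVec, Matrix.one_mulVec, dotProduct_smul]
    simp [smul_eq_mul]
  have h8 : x ⬝ᵥ (((2 : ℝ) • (B⁻¹ᵀ * B⁻¹)) *ᵥ x) = 2 * ((B⁻¹ *ᵥ x) ⬝ᵥ (B⁻¹ *ᵥ x)) := by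
    rw [Matrix.smul_mulVec, dotProduct_smul, ← Matrix.mulVec_mulVec, dpT]
    simp [smul_eq_mul]
  rw [Matrix.fromBlocks_mulVec, sumElim_dotProduct_sumElim]
  simp only [Sum.elim_comp_inl, Sum.elim_comp_inr]
  simp only [Matrix.add_mulVec, dotProduct_add, h1, h2, h3, h5, h7, h8]
  rw [hab]
  ring

end Aux

theorem linear_NI_LMI_iff_L2_LMI {n : ℕ}
    (A B P : Matrix (Fin n) (Fin n) ℝ)
    (hB : IsUnit B.det)
    (hP : P.PosDef)
    (hiden : (1/2 : ℝ) • (P * B * Bᵀ * P) - (2 : ℝ) • (B⁻¹ᵀ * B⁻¹)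
        + (B⁻¹ * A)ᵀ * (B⁻¹ * A) = 0) :
    (∀ z : Fin n ⊕ Fin n → ℝ,
        z ⬝ᵥ ((Matrix.fromBlocks
            (Aᵀ * P + P * A) (P * B - Aᵀ * B⁻¹ᵀ)
            (Bᵀ * P - B⁻¹ * A) (-(2 : ℝ) • (1 : Matrix (Fin n) (Fin n) ℝ))) *ᵥ z) ≤ 0)
    ↔ (∀ z : Fin n ⊕ Fin n → ℝ,
        z ⬝ᵥ ((Matrix.fromBlocks
            (Aᵀ * P + P * A + (2 : ℝ) • (B⁻¹ᵀ * B⁻¹)) (P * B)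
            (Bᵀ * P) (-(2 : ℝ) • (1 : Matrix (Fin n) (Fin n) ℝ))) *ᵥ z) ≤ 0) := by
  have hBB : B * B⁻¹ = 1 := Matrix.mul_nonsing_inv B hB
  have hPt : Pᵀ = P := by
    have := hP.1
    rwa [Matrix.IsHermitian, Matrix.conjTranspose_eq_transpose_of_trivial] at this
  -- scalar form of the identity hypothesis
  have hidq : ∀ x : Fin n → ℝ,
      2 * ((B⁻¹ *ᵥ x) ⬝ᵥ (B⁻¹ *ᵥ x))
        = (1/2) * ((Bᵀ *ᵥ (P *ᵥ x)) ⬝ᵥ (Bᵀ *ᵥ (P *ᵥ x)))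
          + (B⁻¹ *ᵥ (A *ᵥ x)) ⬝ᵥ (B⁻¹ *ᵥ (A *ᵥ x)) := by
    intro x
    have h := congrArg (fun M => x ⬝ᵥ (M *ᵥ x)) hiden
    simp only [Matrix.add_mulVec, Matrix.sub_mulVec, Matrix.smul_mulVec,
      dotProduct_add, dotProduct_sub, dotProduct_smul,
      Matrix.zero_mulVec, dotProduct_zero, smul_eq_mul] at h
    have e1 : x ⬝ᵥ ((P * B * Bᵀ * P) *ᵥ x)
        = (Bᵀ *ᵥ (P *ᵥ x)) ⬝ᵥ (Bᵀ *ᵥ (P *ᵥ x)) := by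
      rw [show P * B * Bᵀ * P = (Bᵀ * P)ᵀ * (Bᵀ * P) by
        rw [Matrix.transpose_mul, Matrix.transpose_transpose, hPt, ← Matrix.mul_assoc]]
      rw [← Matrix.mulVec_mulVec, dpT, ← Matrix.mulVec_mulVec]
    have e2 : x ⬝ᵥ (((B⁻¹ * A)ᵀ * (B⁻¹ * A)) *ᵥ x)
        = (B⁻¹ *ᵥ (A *ᵥ x)) ⬝ᵥ (B⁻¹ *ᵥ (A *ᵥ x)) := by
      rw [← Matrix.mulVec_mulVec, dpT, ← Matrix.mulVec_mulVec]
    have e3 : x ⬝ᵥ ((B⁻¹ᵀ * B⁻¹) *ᵥ x) = (B⁻¹ *ᵥ x) ⬝ᵥ (B⁻¹ *ᵥ x) := by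
      rw [← Matrix.mulVec_mulVec, dpT]
    rw [e1, e2, e3] at h
    linarith
  constructor
  · -- LMI1 → LMI2
    intro h1 z
    set x := z ∘ Sum.inl with hx
    set u := z ∘ Sum.inr with hu
    have hz : z = Sum.elim x u := by
      funext i; cases i <;> rfl
    set a := Bᵀ *ᵥ (P *ᵥ x) with ha
    set b := B⁻¹ *ᵥ (A *ᵥ x) with hb
    -- from LMI1: a + b = 0
    have hsum : a + b = 0 := by
      have := h1 (Sum.elim x ((1/2 : ℝ) • (a - b)))
      rw [form1 A B P hBB hPt] at this
      have key : (a + b) ⬝ᵥ (a + b) ≤ 0 := by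
        simp only [dotProduct_smul, dotProduct_sub, smul_eq_mul,
          smul_dotProduct, sub_dotProduct, add_dotProduct,
          dotProduct_add] at this ⊢
        have hc : a ⬝ᵥ b = b ⬝ᵥ a := dotProduct_comm a b
        linarith
      rw [← dotProduct_self_eq_zero]
      exact le_antisymm key (dp_self_nonneg _)
    have hba : b = -a := by
      rw [eq_neg_iff_add_eq_zero, add_comm]; exact hsum
    rw [hz, form2 A B P hBB hPt, hidq x, ← ha, ← hb, hba]
    have hn : 0 ≤ (u - (1/2 : ℝ) • a) ⬝ᵥ (u - (1/2 : ℝ) • a) := dp_self_nonneg _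
    simp only [dotProduct_sub, sub_dotProduct, dotProduct_smul,
      smul_dotProduct, dotProduct_neg, neg_dotProduct,
      smul_eq_mul] at hn ⊢
    have hc : a ⬝ᵥ u = u ⬝ᵥ a := dotProduct_comm a u
    linarith
  · -- LMI2 → LMI1
    intro h2 z
    set x := z ∘ Sum.inl with hx
    set u := z ∘ Sum.inr with hu
    have hz : z = Sum.elim x u := by
      funext i; cases i <;> rfl
    set a := Bᵀ *ᵥ (P *ᵥ x) with ha
    set b := B⁻¹ *ᵥ (A *ᵥ x) with hb
    have hsum : a + b = 0 := by
      have := h2 (Sum.elim x ((1/2 : ℝ) • a))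
      rw [form2 A B P hBB hPt, hidq x] at this
      have key : (a + b) ⬝ᵥ (a + b) ≤ 0 := by
        simp only [dotProduct_smul, smul_eq_mul,
          smul_dotProduct, add_dotProduct,
          dotProduct_add] at this ⊢
        have hc : a ⬝ᵥ b = b ⬝ᵥ a := dotProduct_comm a b
        linarith
      rw [← dotProduct_self_eq_zero]
      exact le_antisymm key (dp_self_nonneg _)
    have hba : b = -a := by
      rw [eq_neg_iff_add_eq_zero, add_comm]; exact hsum
    rw [hz, form1 A B P hBB hPt, ← ha, ← hb, hba]
    have hn : 0 ≤ (u - a) ⬝ᵥ (u - a) := dp_self_nonneg _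
    simp only [dotProduct_sub, sub_dotProduct,
      dotProduct_neg, neg_dotProduct] at hn ⊢
    have hc : a ⬝ᵥ u = u ⬝ᵥ a := dotProduct_comm a u
    linarith
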